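/- arXiv:math/0512660 — 3 statements merged into one kernel-verified Lean document; each statement's English description precedes it below -/
import Mathlib

section
/- Define r̄ᴰ : ℝ₊ → ℝ by r̄ᴰ(t) = max(0, d - t·1_{t ≤ 1/μ} - ((ρ-1)/ρ · t + 1/λ)·1_{t > 1/μ}), where ρ = λ/μ, 1/μ < d, and μ < λ. Then r̄ᴰ is continuous on ℝ₊, r̄ᴰ(t) > 0 for t < ω̄₀* and r̄ᴰ(t) = 0 for t ≥ ω̄₀*, where ω̄₀* = (ρd - 1/μ)/(ρ - 1). Moreover sup_{t ≥ ω̄₀* - ξ} r̄ᴰ(t) = r̄ᴰ(ω̄₀* - ξ) = ((ρ-1)/ρ)·ξ for any 0 < ξ < ω̄₀* - 1/μ. -/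
/-- Properties of the fluid limit `r̄ᴰ` of the smallest residual deadline in the
M/M/1+D EDF queue: continuity on `ℝ₊`, strict positivity before the fluid
first-loss time `ω̄₀*`, vanishing after it, and the value of the supremum over
`[ω̄₀* - ξ, ∞)`. -/
theorem edf_first_atom_fluid_props (lam mu d : ℝ) (hmu : 0 < mu) (hlam : mu < lam)
    (hd : 1 / mu < d) (rho omega : ℝ) (hrho : rho = lam / mu)
    (homega : omega = (rho * d - 1 / mu) / (rho - 1))
    (r : ℝ → ℝ)
    (hr : ∀ t, r t = max (d - (if t ≤ 1 / mu then t else 0)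
      - (if 1 / mu < t then (rho - 1) / rho * t + 1 / lam else 0)) 0) :
    ContinuousOn r (Set.Ici 0) ∧
    (∀ t, 0 ≤ t → t < omega → 0 < r t) ∧
    (∀ t, omega ≤ t → r t = 0) ∧
    (∀ ξ, 0 < ξ → ξ < omega - 1 / mu →
      IsGreatest (r '' Set.Ici (omega - ξ)) (r (omega - ξ)) ∧
      r (omega - ξ) = (rho - 1) / rho * ξ) := by
  have hlam0 : 0 < lam := hmu.trans hlam
  have hrho1 : 1 < rho := by rw [hrho]; exact (one_lt_div hmu).2 hlam
  have hrho0 : 0 < rho := lt_trans one_pos hrho1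
  have hrm : rho * mu = lam := by rw [hrho]; field_simp
  have hmune : mu ≠ 0 := ne_of_gt hmu
  have hlamne : lam ≠ 0 := ne_of_gt hlam0
  have hrhone : rho ≠ 0 := ne_of_gt hrho0
  have hr1ne : rho - 1 ≠ 0 := by linarith
  -- omega satisfies (rho-1) * omega = rho*d - 1/mu
  have hom1 : (rho - 1) * omega = rho * d - 1 / mu := by
    rw [homega]; field_simp
  have homv : (rho - 1) / rho * omega = d - 1 / lam := by
    rw [div_mul_eq_mul_div, hom1]
    field_simp
    linear_combination hrm
  -- key identity: the second branch equals (rho-1)/rho*(omega - t)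
  have hkey : ∀ t : ℝ, d - ((rho - 1) / rho * t + 1 / lam) = (rho - 1) / rho * (omega - t) := by
    intro t
    rw [mul_sub, homv]; ring
  -- difference identity
  have hdiff : ∀ t : ℝ, (d - t) - (rho - 1) / rho * (omega - t) = (1 / mu - t) / rho := by
    intro t
    rw [← hkey t]
    field_simp
    linear_combination hrm
  -- closed form for r
  have hr2 : ∀ t : ℝ, r t = max (max (d - t) ((rho - 1) / rho * (omega - t))) 0 := by
    intro t
    rw [hr]
    rcases le_or_gt t (1 / mu) with h | h
    · rw [if_pos h, if_neg (not_lt.2 h)]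
      have h1 : (rho - 1) / rho * (omega - t) ≤ d - t := by
        have := hdiff t
        have : 0 ≤ (d - t) - (rho - 1) / rho * (omega - t) := by
          rw [this]; exact div_nonneg (by linarith) hrho0.le
        linarith
      rw [max_eq_left h1]
      ring_nf
    · have h1 : d - t ≤ (rho - 1) / rho * (omega - t) := by
        have h2 := hdiff t
        have h3 : (1 / mu - t) / rho ≤ 0 :=
          div_nonpos_of_nonpos_of_nonneg (by linarith) (le_of_lt hrho0)
        linarith
      rw [if_neg (not_le.2 h), if_pos h, sub_zero, hkey t, max_eq_right h1]
  have homd : d < omega := by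
    have : (rho - 1) * omega - (rho - 1) * d = d - 1 / mu := by nlinarith [hom1]
    nlinarith
  have hommu : 1 / mu < omega := lt_trans hd homd
  refine ⟨?_, ?_, ?_, ?_⟩
  · have : Continuous fun t : ℝ => max (max (d - t) ((rho - 1) / rho * (omega - t))) 0 := by
      fun_prop
    have heq : r = fun t : ℝ => max (max (d - t) ((rho - 1) / rho * (omega - t))) 0 :=
      funext hr2
    rw [heq]
    exact this.continuousOn
  · intro t ht0 htω
    rw [hr2]
    rcases le_or_gt t (1 / mu) with h | h
    · have : 0 < d - t := by linarith
      calc (0:ℝ) < d - t := this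
        _ ≤ max (d - t) ((rho - 1) / rho * (omega - t)) := le_max_left _ _
        _ ≤ _ := le_max_left _ _
    · have : 0 < (rho - 1) / rho * (omega - t) := by
        apply mul_pos (div_pos (by linarith) hrho0)
        linarith
      calc (0:ℝ) < (rho - 1) / rho * (omega - t) := this
        _ ≤ max (d - t) ((rho - 1) / rho * (omega - t)) := le_max_right _ _
        _ ≤ _ := le_max_left _ _
  · intro t ht
    rw [hr2]
    have h1 : d - t ≤ 0 := by linarith
    have h2 : (rho - 1) / rho * (omega - t) ≤ 0 := by
      exact mul_nonpos_of_nonneg_of_nonpos (div_pos (by linarith) hrho0).le (by linarith)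
    rw [max_eq_right (le_trans (max_le h1 h2) le_rfl)]
  · intro ξ hξ0 hξω
    have hval : r (omega - ξ) = (rho - 1) / rho * ξ := by
      rw [hr2]
      have hmt : 1 / mu < omega - ξ := by linarith
      have h1 : d - (omega - ξ) ≤ (rho - 1) / rho * (omega - (omega - ξ)) := by
        have h2 := hdiff (omega - ξ)
        have h3 : (1 / mu - (omega - ξ)) / rho ≤ 0 :=
          div_nonpos_of_nonpos_of_nonneg (by linarith) (le_of_lt hrho0)
        linarith
      rw [max_eq_right h1]
      have h4 : 0 ≤ (rho - 1) / rho * (omega - (omega - ξ)) := by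
        exact mul_nonneg (div_pos (by linarith) hrho0).le (by linarith)
      rw [max_eq_left h4]
      ring_nf
    refine ⟨⟨⟨omega - ξ, Set.self_mem_Ici, rfl⟩, ?_⟩, hval⟩
    rintro y ⟨t, ht, rfl⟩
    rw [hval, hr2]
    simp only [Set.mem_Ici] at ht
    have hmt : 1 / mu < t := by linarith
    have h1 : d - t ≤ (rho - 1) / rho * (omega - t) := by
      have h2 := hdiff t
      have h3 : (1 / mu - t) / rho ≤ 0 :=
        div_nonpos_of_nonpos_of_nonneg (by linarith) (le_of_lt hrho0)
      linarith
    have h2 : (rho - 1) / rho * (omega - t) ≤ (rho - 1) / rho * ξ := by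
      exact mul_le_mul_of_nonneg_left (by linarith) (div_pos (by linarith) hrho0).le
    have h3 : (0:ℝ) ≤ (rho - 1) / rho * ξ := by
      exact mul_nonneg (div_pos (by linarith) hrho0).le hξ0.le
    exact max_le (max_le (le_trans h1 h2) h2) h3
end

section
/- Define the fluid limit measure ν̄*ᴰ_t of the M/M/1+D EDF queue by ⟨ν̄*ᴰ_t, f⟩ = f(d - t) - μ∫₀ᵗ f(r̄ᴰ(s) + s - t) ds + λ∫₀ᵗ f(d - s) ds, for f bounded càdlàg. Then for all t ≥ 0, ⟨ν̄*ᴰ_t, 1_{ℝ₊}⟩ = (1 + (λ - μ)t)·1_{t ≤ ω̄₀*} + λd·1_{t ≥ ω̄₀*}, where ω̄₀* = (ρd - 1/μ)/(ρ - 1) and ρ = λ/μ. -/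
open intervalIntegral
open MeasureTheory
set_option maxHeartbeats 1000000

lemma my_eval {f : ℝ → ℝ} {a b c : ℝ} (hab : a ≤ b)
    (h : ∀ s ∈ Set.Ioo a b, f s = c) : ∫ s in a..b, f s = (b - a) * c := by
  rw [intervalIntegral.integral_of_le hab, MeasureTheory.integral_Ioc_eq_integral_Ioo,
    MeasureTheory.setIntegral_congr_fun measurableSet_Ioo h, MeasureTheory.setIntegral_const]
  simp [Real.volume_Ioo, ENNReal.toReal_ofReal (by linarith : (0:ℝ) ≤ b - a), smul_eq_mul, hab]

lemma my_integrable {f : ℝ → ℝ} {a b c : ℝ} (hab : a ≤ b)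
    (h : ∀ s ∈ Set.Ioo a b, f s = c) : IntervalIntegrable f volume a b := by
  rw [intervalIntegrable_iff_integrableOn_Ioc_of_le hab,
    integrableOn_Ioc_iff_integrableOn_Ioo]
  exact (integrableOn_const (by simp [Real.volume_Ioo] : volume (Set.Ioo a b) ≠ ⊤)).congr_fun
    (fun s hs => (h s hs).symm) measurableSet_Ioo

/-- Fluid approximation of the normalized queue length of the M/M/1+D EDF queue:
testing the fluid profile measure `ν̄*ᴰ_t` against the indicator of `(0,∞)` gives
`1 + (λ-μ)t` before the fluid first-loss time `ω̄₀*` and `λd` after. -/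
theorem edf_fluid_queue_length (lam mu d : ℝ) (hmu : 0 < mu) (hlam : mu < lam)
    (hd : 1 / mu < d) (rho omega : ℝ) (hrho : rho = lam / mu)
    (homega : omega = (rho * d - 1 / mu) / (rho - 1))
    (r : ℝ → ℝ)
    (hr : ∀ t, r t = max (d - (if t ≤ 1 / mu then t else 0)
      - (if 1 / mu < t then (rho - 1) / rho * t + 1 / lam else 0)) 0)
    (ind : ℝ → ℝ) (hind : ∀ x, ind x = if 0 < x then 1 else 0) :
    ∀ t : ℝ, 0 ≤ t →
      ind (d - t) - mu * (∫ s in (0:ℝ)..t, ind (r s + s - t))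
          + lam * ∫ s in (0:ℝ)..t, ind (d - s)
        = if t ≤ omega then 1 + (lam - mu) * t else lam * d := by
  have hlam0 : 0 < lam := hmu.trans hlam
  have hρ0 : 0 < rho := by rw [hrho]; positivity
  have hρ1 : 1 < rho := by rw [hrho]; exact (one_lt_div hmu).2 hlam
  have hρ1' : rho - 1 ≠ 0 := by linarith
  have hkey : (rho - 1) * omega = rho * d - 1 / mu := by
    rw [homega]; field_simp
  have hql : rho * (1 / lam) = 1 / mu := by
    rw [hrho]; field_simp
  have hml : mu * rho = lam := by rw [hrho]; field_simp
  have hmu1 : mu * (1 / mu) = 1 := by field_simp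
  have h0mu : 0 < 1 / mu := by positivity
  have hdpos : 0 < d := h0mu.trans hd
  set u := (rho - 1) / rho with hu_def
  clear_value u
  have hu : rho * u = rho - 1 := by rw [hu_def]; field_simp
  have hu0 : 0 < u := by rw [hu_def]; exact div_pos (by linarith) hρ0
  have hgomega : u * omega + 1 / lam = d := by
    have h2 : rho * (u * omega + 1 / lam) = rho * d := by
      linear_combination omega * hu + hkey + hql
    exact mul_left_cancel₀ (ne_of_gt hρ0) h2
  have hdo : d < omega := by
    have h2 : (rho - 1) * (omega - d) = d - 1 / mu := by linear_combination hkey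
    nlinarith [h2]
  intro t ht
  obtain ⟨a, ha_def⟩ : ∃ a, a = rho * t + 1 / mu - rho * d := ⟨_, rfl⟩
  have hfact : ∀ s, rho * (d - 0 - (u * s + 1 / lam) + s - t) = s - a := by
    intro s
    rw [ha_def]
    linear_combination (-s) * hu - hql
  -- second integral pieces
  have hJle : ∀ T : ℝ, 0 ≤ T → T ≤ d → (∫ s in (0:ℝ)..T, ind (d - s)) = T := by
    intro T hT hTd
    have pv : ∀ s ∈ Set.Ioo (0:ℝ) T, ind (d - s) = 1 := fun s hs => by
      rw [hind]; rw [if_pos (by rcases hs with ⟨_, h2⟩; linarith)]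
    have := my_eval hT pv
    linarith
  have hJge : d ≤ t → (∫ s in (0:ℝ)..t, ind (d - s)) = d := by
    intro hdt
    have p1 : ∀ s ∈ Set.Ioo (0:ℝ) d, ind (d - s) = 1 := fun s hs => by
      rw [hind]; rw [if_pos (by rcases hs with ⟨_, h2⟩; linarith)]
    have p2 : ∀ s ∈ Set.Ioo d t, ind (d - s) = 0 := fun s hs => by
      rw [hind]; rw [if_neg (by rcases hs with ⟨h1, _⟩; push_neg; linarith)]
    have hsplit := intervalIntegral.integral_add_adjacent_intervals
      (my_integrable hdpos.le p1) (my_integrable hdt p2)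
    have e1 := my_eval hdpos.le p1
    have e2 := my_eval hdt p2
    rw [e1, e2] at hsplit
    rw [← hsplit]; ring
  by_cases hcase1 : t < d
  · -- t < d ≤ omega
    have hto : t ≤ omega := by linarith
    have hI1 : (∫ s in (0:ℝ)..t, ind (r s + s - t)) = t := by
      have pv : ∀ s ∈ Set.Ioo (0:ℝ) t, ind (r s + s - t) = 1 := by
        intro s hs
        rcases hs with ⟨hs0, hst⟩
        rw [hr s, hind]
        by_cases hs1 : s ≤ 1 / mu
        · rw [if_pos hs1, if_neg (not_lt.2 hs1)]
          have hmax : max (d - s - 0) 0 = d - s - 0 := max_eq_left (by linarith)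
          rw [hmax, if_pos (by linarith)]
        · push_neg at hs1
          rw [if_neg (not_le.2 hs1), if_pos hs1]
          have hsw : s < omega := by linarith
          have hg : 0 < d - 0 - (u * s + 1 / lam) := by
            nlinarith [mul_pos hu0 (sub_pos.2 hsw), hgomega]
          have hmax : max (d - 0 - (u * s + 1 / lam)) 0 = d - 0 - (u * s + 1 / lam) :=
            max_eq_left (le_of_lt hg)
          rw [hmax]
          have hsa : a < s := by nlinarith [mul_pos hρ0 (sub_pos.2 hcase1)]
          have hpos : 0 < d - 0 - (u * s + 1 / lam) + s - t := by
            nlinarith [hfact s]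
          rw [if_pos hpos]
      have := my_eval ht pv
      linarith
    rw [hI1, hJle t ht hcase1.le, if_pos hto, hind, if_pos (by linarith)]
    ring
  · push_neg at hcase1
    by_cases hcase2 : t ≤ omega
    · -- d ≤ t ≤ omega
      have hta : t - a = (rho - 1) * (omega - t) := by
        rw [ha_def]; linear_combination (-1 : ℝ) * hkey
      have hr1 : (0:ℝ) ≤ rho - 1 := by linarith
      have hot : (0:ℝ) ≤ omega - t := by linarith
      have hat : a ≤ t := by nlinarith [mul_nonneg hr1 hot]
      have htd : (0:ℝ) ≤ t - d := by linarith
      have hma : 1 / mu ≤ a := by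
        nlinarith [mul_nonneg hρ0.le htd]
      have h0a : 0 ≤ a := h0mu.le.trans hma
      have p1 : ∀ s ∈ Set.Ioo (0:ℝ) a, ind (r s + s - t) = 0 := by
        intro s hs
        rcases hs with ⟨hs0, hsa⟩
        rw [hr s, hind]
        by_cases hs1 : s ≤ 1 / mu
        · rw [if_pos hs1, if_neg (not_lt.2 hs1)]
          have hmax : max (d - s - 0) 0 = d - s - 0 := max_eq_left (by linarith)
          rw [hmax, if_neg (by push_neg; linarith)]
        · push_neg at hs1
          rw [if_neg (not_le.2 hs1), if_pos hs1]
          have hsw : s < omega := by linarith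
          have hg : 0 < d - 0 - (u * s + 1 / lam) := by
            nlinarith [mul_pos hu0 (sub_pos.2 hsw), hgomega]
          have hmax : max (d - 0 - (u * s + 1 / lam)) 0 = d - 0 - (u * s + 1 / lam) :=
            max_eq_left (le_of_lt hg)
          rw [hmax, if_neg (by push_neg; nlinarith [hfact s])]
      have p2 : ∀ s ∈ Set.Ioo a t, ind (r s + s - t) = 1 := by
        intro s hs
        rcases hs with ⟨hsa, hst⟩
        have hs1 : 1 / mu < s := lt_of_le_of_lt hma hsa
        rw [hr s, hind, if_neg (not_le.2 hs1), if_pos hs1]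
        have hsw : s < omega := by linarith
        have hg : 0 < d - 0 - (u * s + 1 / lam) := by
          nlinarith [mul_pos hu0 (sub_pos.2 hsw), hgomega]
        have hmax : max (d - 0 - (u * s + 1 / lam)) 0 = d - 0 - (u * s + 1 / lam) :=
          max_eq_left (le_of_lt hg)
        rw [hmax, if_pos (by nlinarith [hfact s])]
      have hsplit := intervalIntegral.integral_add_adjacent_intervals
        (my_integrable h0a p1) (my_integrable hat p2)
      have e1 := my_eval h0a p1
      have e2 := my_eval hat p2
      rw [e1, e2] at hsplit
      have hI1 : (∫ s in (0:ℝ)..t, ind (r s + s - t)) = t - a := by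
        rw [← hsplit]; ring
      rw [hI1, hJge hcase1, if_pos hcase2, hind, if_neg (by push_neg; linarith)]
      rw [ha_def]
      linear_combination (t - d) * hml + hmu1
    · -- omega < t
      push_neg at hcase2
      have hdt : d ≤ t := by linarith
      have haw : a - omega = rho * (t - omega) := by
        rw [ha_def]; linear_combination hkey
      have hI1 : (∫ s in (0:ℝ)..t, ind (r s + s - t)) = 0 := by
        have pv : ∀ s ∈ Set.Ioo (0:ℝ) t, ind (r s + s - t) = 0 := by
          intro s hs
          rcases hs with ⟨hs0, hst⟩
          rw [hr s, hind]
          by_cases hs1 : s ≤ 1 / mu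
          · rw [if_pos hs1, if_neg (not_lt.2 hs1)]
            have hmax : max (d - s - 0) 0 = d - s - 0 := max_eq_left (by linarith)
            rw [hmax, if_neg (by push_neg; linarith)]
          · push_neg at hs1
            rw [if_neg (not_le.2 hs1), if_pos hs1]
            by_cases hsw : s < omega
            · have hg : 0 < d - 0 - (u * s + 1 / lam) := by
                nlinarith [mul_pos hu0 (sub_pos.2 hsw), hgomega]
              have hmax : max (d - 0 - (u * s + 1 / lam)) 0 = d - 0 - (u * s + 1 / lam) :=
                max_eq_left (le_of_lt hg)
              have hsa : s < a := by
                nlinarith [mul_pos hρ0 (sub_pos.2 hcase2)]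
              rw [hmax, if_neg (by push_neg; nlinarith [hfact s])]
            · push_neg at hsw
              have hg : d - 0 - (u * s + 1 / lam) ≤ 0 := by
                nlinarith [mul_nonneg hu0.le (sub_nonneg.2 hsw), hgomega]
              have hmax : max (d - 0 - (u * s + 1 / lam)) 0 = 0 := max_eq_right hg
              rw [hmax, if_neg (by push_neg; linarith)]
        have := my_eval ht pv
        linarith
      rw [hI1, hJge hdt, if_neg (not_le.2 hcase2), hind, if_neg (by push_neg; linarith)]
      ring
end

section
/- With the same fluid limit measure ν̄*ᴰ_t, for all t ≥ 0, ⟨ν̄*ᴰ_t, 1_{ℝ₋}⟩ = (1 + λ(t - d) - μt)·1_{t ≥ ω̄₀*}, where 1_{ℝ₋} is the indicator of (-∞, 0] and ω̄₀* = (ρd - 1/μ)/(ρ-1). -/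
set_option maxHeartbeats 1000000

open intervalIntegral

private lemma toReal_ofReal_max' (x : ℝ) : (ENNReal.ofReal x).toReal = max x 0 := by
  rcases le_total 0 x with h | h
  · rw [ENNReal.toReal_ofReal h, max_eq_left h]
  · rw [ENNReal.ofReal_of_nonpos h, max_eq_right h, ENNReal.toReal_zero]

private lemma int_ind_le' (t a : ℝ) (ht : 0 ≤ t) :
    (∫ s in (0:ℝ)..t, (if s ≤ a then (1:ℝ) else 0)) = max (min t a) 0 := by
  rw [intervalIntegral.integral_of_le ht]
  have h1 : ∀ s : ℝ, (if s ≤ a then (1:ℝ) else 0) = (Set.Iic a).indicator (fun _ => (1:ℝ)) s := by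
    intro s; simp [Set.indicator_apply]
  simp_rw [h1]
  rw [MeasureTheory.integral_indicator measurableSet_Iic,
    MeasureTheory.Measure.restrict_restrict measurableSet_Iic]
  have h2 : Set.Iic a ∩ Set.Ioc 0 t = Set.Ioc 0 (min a t) := by
    ext x
    simp only [Set.mem_inter_iff, Set.mem_Iic, Set.mem_Ioc, le_min_iff]
    tauto
  rw [h2]
  simp [Real.volume_Ioc, toReal_ofReal_max', min_comm]

private lemma int_ind_ge' (t a : ℝ) (ht : 0 ≤ t) (ha : 0 < a) :
    (∫ s in (0:ℝ)..t, (if a ≤ s then (1:ℝ) else 0)) = max (t - a) 0 := by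
  rw [intervalIntegral.integral_of_le ht]
  have h1 : ∀ s : ℝ, (if a ≤ s then (1:ℝ) else 0) = (Set.Ici a).indicator (fun _ => (1:ℝ)) s := by
    intro s; simp [Set.indicator_apply]
  simp_rw [h1]
  rw [MeasureTheory.integral_indicator measurableSet_Ici,
    MeasureTheory.Measure.restrict_restrict measurableSet_Ici]
  have h2 : Set.Ici a ∩ Set.Ioc 0 t = Set.Icc a t := by
    ext x
    simp only [Set.mem_inter_iff, Set.mem_Ici, Set.mem_Ioc, Set.mem_Icc]
    constructor
    · rintro ⟨h1, h2, h3⟩; exact ⟨h1, h3⟩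
    · rintro ⟨h1, h2⟩; exact ⟨h1, lt_of_lt_of_le ha h1, h2⟩
  rw [h2]
  simp [Real.volume_Icc, toReal_ofReal_max']

/-- Fluid approximation of the normalized loss process of the M/M/1+D EDF queue:
testing the fluid profile measure `ν̄*ᴰ_t` against the indicator of `(-∞,0]` gives
`(1 + λ(t-d) - μt)·1_{t ≥ ω̄₀*}`. -/
theorem edf_fluid_loss_process (lam mu d : ℝ) (hmu : 0 < mu) (hlam : mu < lam)
    (hd : 1 / mu < d) (rho omega : ℝ) (hrho : rho = lam / mu)
    (homega : omega = (rho * d - 1 / mu) / (rho - 1))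
    (r : ℝ → ℝ)
    (hr : ∀ t, r t = max (d - (if t ≤ 1 / mu then t else 0)
      - (if 1 / mu < t then (rho - 1) / rho * t + 1 / lam else 0)) 0)
    (ind : ℝ → ℝ) (hind : ∀ x, ind x = if x ≤ 0 then 1 else 0) :
    ∀ t : ℝ, 0 ≤ t →
      ind (d - t) - mu * (∫ s in (0:ℝ)..t, ind (r s + s - t))
          + lam * ∫ s in (0:ℝ)..t, ind (d - s)
        = if omega ≤ t then 1 + lam * (t - d) - mu * t else 0 := by
  intro t ht
  have hmu' : (0:ℝ) < 1 / mu := by positivity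
  have hlam0 : (0:ℝ) < lam := hmu.trans hlam
  have hrho1 : 1 < rho := by
    rw [hrho, lt_div_iff₀ hmu]; linarith
  have hrho0 : (0:ℝ) < rho := by linarith
  have hmr : mu * rho = lam := by
    rw [hrho]; field_simp
  have him : mu * (1 / mu) = 1 := by field_simp
  have hil : rho * (1 / lam) = 1 / mu := by
    rw [hrho]; field_simp
  have hd0 : (0:ℝ) < d := lt_trans hmu' hd
  have homega' : omega * (rho - 1) = rho * d - 1 / mu := by
    rw [homega, div_mul_cancel₀ _ (by nlinarith : rho - 1 ≠ 0)]
  have hdo : d < omega := by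
    by_contra h
    push_neg at h
    have h2 := mul_le_mul_of_nonneg_right h (by linarith : (0:ℝ) ≤ rho - 1)
    rw [homega'] at h2
    nlinarith [h2, hd]
  -- key multiplicative identity for the inner expression
  have key : ∀ s : ℝ, rho * (d - ((rho - 1) / rho * s + 1 / lam))
      = rho * d - (rho - 1) * s - 1 / mu := by
    intro s
    have h1 : rho * ((rho - 1) / rho * s) = (rho - 1) * s := by
      field_simp
    nlinarith [h1, hil]
  -- second integral
  have hI2 : (∫ s in (0:ℝ)..t, ind (d - s)) = max (t - d) 0 := by
    have h1 : ∀ s : ℝ, ind (d - s) = if d ≤ s then (1:ℝ) else 0 := by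
      intro s; rw [hind]
      simp [sub_nonpos]
    simp_rw [h1]
    exact int_ind_ge' t d ht hd0
  by_cases hdt : d ≤ t
  · -- case d ≤ t
    obtain ⟨c, hcdef⟩ : ∃ c : ℝ, c = rho * (t - d) + 1 / mu := ⟨_, rfl⟩
    have hrtd : 0 ≤ rho * (t - d) := mul_nonneg hrho0.le (by linarith)
    have hc0 : (0:ℝ) < c := by rw [hcdef]; linarith
    have hcm : (1:ℝ) / mu ≤ c := by rw [hcdef]; linarith
    have hI1 : (∫ s in (0:ℝ)..t, ind (r s + s - t)) = min t c := by
      have heq : Set.EqOn (fun s => ind (r s + s - t))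
          (fun s => if s ≤ c then (1:ℝ) else 0) (Set.uIcc 0 t) := by
        intro s hs
        rw [Set.uIcc_of_le ht, Set.mem_Icc] at hs
        obtain ⟨hs0, hst⟩ := hs
        simp only
        rw [hind, hr]
        by_cases h1 : s ≤ 1 / mu
        · rw [if_pos h1, if_neg (not_lt.mpr h1)]
          have hmax : max (d - s - 0) 0 = d - s := by
            rw [sub_zero]; exact max_eq_left (by linarith)
          rw [hmax, if_pos (by linarith : d - s + s - t ≤ 0),
            if_pos (by linarith : s ≤ c)]
        · push_neg at h1
          rw [if_neg (not_le.mpr h1), if_pos h1]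
          have hk := key s
          by_cases h2 : s ≤ c
          · have h2' : s ≤ rho * t - rho * d + 1 / mu := by
              rw [hcdef] at h2; nlinarith [h2]
            have hin : d - ((rho - 1) / rho * s + 1 / lam) ≤ t - s := by
              rw [← mul_le_mul_iff_right₀ hrho0, hk]
              nlinarith [h2']
            have hmax : max (d - 0 - ((rho - 1) / rho * s + 1 / lam)) 0 + s - t ≤ 0 := by
              have h3 : max (d - 0 - ((rho - 1) / rho * s + 1 / lam)) 0 ≤ t - s := by
                apply max_le
                · linarith [hin]
                · linarith
              linarith
            rw [if_pos hmax, if_pos h2]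
          · push_neg at h2
            have h2' : rho * t - rho * d + 1 / mu < s := by
              rw [hcdef] at h2; nlinarith [h2]
            have hin : t - s < d - ((rho - 1) / rho * s + 1 / lam) := by
              rw [← mul_lt_mul_iff_right₀ hrho0, hk]
              nlinarith [h2']
            have hmax : ¬ (max (d - 0 - ((rho - 1) / rho * s + 1 / lam)) 0 + s - t ≤ 0) := by
              push_neg
              have h3 : d - 0 - ((rho - 1) / rho * s + 1 / lam)
                  ≤ max (d - 0 - ((rho - 1) / rho * s + 1 / lam)) 0 := le_max_left _ _
              linarith [hin]
            rw [if_neg hmax, if_neg (not_le.mpr h2)]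
      rw [intervalIntegral.integral_congr heq, int_ind_le' t c ht]
      exact max_eq_left (le_min ht hc0.le)
    have hindd : ind (d - t) = 1 := by
      rw [hind, if_pos (by linarith : d - t ≤ 0)]
    have hmax2 : max (t - d) 0 = t - d := max_eq_left (by linarith)
    rw [hindd, hI1, hI2, hmax2]
    by_cases hot : omega ≤ t
    · rw [if_pos hot]
      have hct : t ≤ c := by
        rw [hcdef]
        nlinarith [mul_nonneg (sub_nonneg.mpr hot) (by linarith : (0:ℝ) ≤ rho - 1), homega']
      rw [min_eq_left hct]
      ring
    · rw [if_neg hot]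
      push_neg at hot
      have hct : c ≤ t := by
        rw [hcdef]
        nlinarith [mul_nonneg (sub_nonneg.mpr hot.le) (by linarith : (0:ℝ) ≤ rho - 1),
          mul_nonpos_of_nonpos_of_nonneg (by linarith : t - omega ≤ 0)
          (by linarith : (0:ℝ) ≤ rho - 1), homega']
      rw [min_eq_right hct]
      have hmc : mu * c = lam * (t - d) + 1 := by
        rw [hcdef]
        linear_combination (t - d) * hmr + him
      rw [hmc]; ring
  · -- case t < d
    push_neg at hdt
    have hI1 : (∫ s in (0:ℝ)..t, ind (r s + s - t)) = 0 := by
      have heq : Set.EqOn (fun s => ind (r s + s - t))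
          (fun _ => (0:ℝ)) (Set.uIcc 0 t) := by
        intro s hs
        rw [Set.uIcc_of_le ht, Set.mem_Icc] at hs
        obtain ⟨hs0, hst⟩ := hs
        simp only
        rw [hind, hr]
        by_cases h1 : s ≤ 1 / mu
        · rw [if_pos h1, if_neg (not_lt.mpr h1)]
          have hmax : max (d - s - 0) 0 = d - s := by
            rw [sub_zero]; exact max_eq_left (by linarith)
          rw [hmax, if_neg (by push_neg; linarith : ¬ (d - s + s - t ≤ 0))]
        · push_neg at h1
          rw [if_neg (not_le.mpr h1), if_pos h1]
          have hk := key s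
          have hin : t - s < d - ((rho - 1) / rho * s + 1 / lam) := by
            rw [← mul_lt_mul_iff_right₀ hrho0, hk]
            nlinarith [mul_lt_mul_of_pos_left hdt hrho0, h1]
          have hmax : ¬ (max (d - 0 - ((rho - 1) / rho * s + 1 / lam)) 0 + s - t ≤ 0) := by
            push_neg
            have h3 : d - 0 - ((rho - 1) / rho * s + 1 / lam)
                ≤ max (d - 0 - ((rho - 1) / rho * s + 1 / lam)) 0 := le_max_left _ _
            linarith [hin]
          rw [if_neg hmax]
      rw [intervalIntegral.integral_congr heq, intervalIntegral.integral_zero]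
    have hindd : ind (d - t) = 0 := by
      rw [hind, if_neg (by push_neg; linarith : ¬ (d - t ≤ 0))]
    have hmax2 : max (t - d) 0 = 0 := max_eq_right (by linarith)
    rw [hindd, hI1, hI2, hmax2, if_neg (by push_neg; linarith : ¬ (omega ≤ t))]
    ring
end
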